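/- If a connected graph has n vertices ordered v_1, ..., v_n such that each initial segment induces a connected subgraph, then it admits a representation by pairwise disjoint nonempty (not necessarily connected) subsets of R^2 in which two vertices are adjacent iff there is a segment between points of their regions meeting no other region; hence every finite connected graph is a visibility graph when representing regions need not be connected. -/

import Mathlib

open Set

/-- A sightline between the regions of `u` and `v`: a segment from a point of `F u`
to a point of `F v` meeting no other region. -/
def Sightline {V : Type*} (F : V → Set (ℝ × ℝ)) (u v : V) : Prop :=
  ∃ a ∈ F u, ∃ b ∈ F v, ∀ w, w ≠ u → w ≠ v → segment ℝ a b ∩ F w = ∅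

/-- A visibility representation of a simple graph by regions in the plane. -/
structure IsVisRep {V : Type*} (G : SimpleGraph V) (F : V → Set (ℝ × ℝ)) : Prop where
  nonempty : ∀ v, (F v).Nonempty
  disjoint : ∀ u v, u ≠ v → Disjoint (F u) (F v)
  adj_iff : ∀ u v, u ≠ v → (G.Adj u v ↔ Sightline F u v)

private lemma walk_getLast {V : Type*} {G : SimpleGraph V} {u v : V} (w : G.Walk u v) :
    w.support.getLast? = some v := by
  induction w with
  | nil => simp
  | @cons a b c h p ih =>
    rw [SimpleGraph.Walk.support_cons, p.support_eq_cons, List.getLast?_cons_cons,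
      ← p.support_eq_cons]
    exact ih

private lemma dist_mk_zero (x y : ℝ) : dist ((x, (0:ℝ)) : ℝ × ℝ) (y, 0) = |x - y| := by
  rw [Prod.dist_eq]
  simp [Real.dist_eq]

private lemma exists_on_segment_dist {a b c : ℝ × ℝ} {r : ℝ}
    (h : (dist a c ≤ r ∧ r ≤ dist b c) ∨ (dist b c ≤ r ∧ r ≤ dist a c)) :
    ∃ x ∈ segment ℝ a b, dist x c = r := by
  have hcont : ContinuousOn (fun θ : ℝ => dist ((1 - θ) • a + θ • b) c) (Icc 0 1) := by
    fun_prop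
  have h0 : (fun θ : ℝ => dist ((1 - θ) • a + θ • b) c) 0 = dist a c := by norm_num
  have h1 : (fun θ : ℝ => dist ((1 - θ) • a + θ • b) c) 1 = dist b c := by norm_num
  rw [segment_eq_image]
  rcases h with h | h
  · have hsub := intermediate_value_Icc (zero_le_one (α := ℝ)) hcont
    simp only [sub_zero, one_smul, zero_smul, add_zero, sub_self, zero_add] at hsub
    obtain ⟨θ, hθ, hx⟩ := hsub ⟨h.1, h.2⟩
    exact ⟨_, Set.mem_image_of_mem _ hθ, hx⟩
  · have hsub := intermediate_value_Icc' (zero_le_one (α := ℝ)) hcont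
    simp only [sub_zero, one_smul, zero_smul, add_zero, sub_self, zero_add] at hsub
    obtain ⟨θ, hθ, hx⟩ := hsub ⟨h.1, h.2⟩
    exact ⟨_, Set.mem_image_of_mem _ hθ, hx⟩

theorem stmt15 {V : Type*} [Fintype V] (G : SimpleGraph V) (hG : G.Connected)
    (e : Fin (Fintype.card V) ≃ V)
    (hord : ∀ k : Fin (Fintype.card V),
      (G.induce {v : V | ∃ i, i ≤ k ∧ e i = v}).Connected) :
    ∃ F : V → Set (ℝ × ℝ), (∀ v, (F v).Nonempty) ∧
      (∀ u v, u ≠ v → Disjoint (F u) (F v)) ∧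
      ∀ u v, u ≠ v → (G.Adj u v ↔ Sightline F u v) := by
  classical
  by_cases hE : ∃ a b, G.Adj a b
  swap
  · refine ⟨fun _ => {(0, 0)}, fun v => ⟨(0, 0), rfl⟩, ?_, ?_⟩ <;>
    · intro u v huv
      refine absurd ?_ huv
      obtain ⟨w⟩ := hG.preconnected u v
      cases w with
      | nil => rfl
      | cons h _ => exact absurd ⟨_, _, h⟩ hE
  obtain ⟨a₀, b₀, hab₀⟩ := hE
  have hnb : ∀ v : V, ∃ t, G.Adj v t := by
    intro v
    obtain ⟨w⟩ := hG.preconnected v a₀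
    cases w with
    | nil => exact ⟨b₀, hab₀⟩
    | cons h _ => exact ⟨_, h⟩
  set X : V := a₀ with hX
  have hWalk : ∀ s t : V, ∃ l : List V,
      l[0]? = some s ∧ l[1]? = some t ∧
      (G.Adj s t → l.IsChain G.Adj) ∧
      l[(l.length - 1)]? = some X := by
    intro s t
    obtain ⟨w⟩ := hG.preconnected t X
    refine ⟨s :: w.support, rfl, ?_, ?_, ?_⟩
    · rw [w.support_eq_cons]
      rfl
    · intro hst
      rw [List.isChain_cons]
      refine ⟨?_, w.isChain_adj_support⟩
      intro y hy
      rw [w.support_eq_cons] at hy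
      simp only [List.head?_cons, Option.mem_def, Option.some.injEq] at hy
      rw [← hy]
      exact hst
    · have h1 : (s :: w.support).getLast? = some X := by
        rw [w.support_eq_cons, List.getLast?_cons_cons, ← w.support_eq_cons]
        exact walk_getLast w
      rw [← List.getLast?_eq_getElem?]
      exact h1
  choose Lf hL0 hL1 hLchain hLlast using hWalk
  set M : ℕ := Finset.univ.sup (fun p : V × V => (Lf p.1 p.2).length) with hM
  have hlenM : ∀ p : V × V, (Lf p.1 p.2).length ≤ M :=
    fun p => Finset.le_sup (f := fun p : V × V => (Lf p.1 p.2).length) (Finset.mem_univ p)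
  set R : ℝ := 10 * M + 20 with hR
  have hM0 : (0:ℝ) ≤ (M:ℝ) := Nat.cast_nonneg M
  have hR0 : (0:ℝ) ≤ R := by rw [hR]; linarith
  set cx : V × V → ℝ := fun p => R * ((Fintype.equivFin (V × V)) p : ℕ) with hcx
  have hsep : ∀ p q : V × V, p ≠ q → R ≤ dist ((cx p, (0:ℝ)) : ℝ × ℝ) (cx q, 0) := by
    intro p q hpq
    rw [dist_mk_zero, hcx]
    have h1 : (((Fintype.equivFin (V × V)) p : ℕ) : ℤ) ≠ (((Fintype.equivFin (V × V)) q : ℕ) : ℤ) := by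
      intro h
      exact hpq ((Fintype.equivFin (V × V)).injective (Fin.ext (by exact_mod_cast h)))
    have h2 : (1:ℤ) ≤ |(((Fintype.equivFin (V × V)) p : ℕ) : ℤ) - (((Fintype.equivFin (V × V)) q : ℕ) : ℤ)| :=
      Int.one_le_abs (sub_ne_zero.mpr h1)
    have h3 : (1:ℝ) ≤ |(((Fintype.equivFin (V × V)) p : ℕ) : ℝ) - (((Fintype.equivFin (V × V)) q : ℕ) : ℝ)| := by
      exact_mod_cast h2
    calc R = R * 1 := (mul_one R).symm
    _ ≤ R * |(((Fintype.equivFin (V × V)) p : ℕ) : ℝ) - (((Fintype.equivFin (V × V)) q : ℕ) : ℝ)| := by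
        apply mul_le_mul_of_nonneg_left h3 hR0
    _ = |R * (((Fintype.equivFin (V × V)) p : ℕ) : ℝ) - R * (((Fintype.equivFin (V × V)) q : ℕ) : ℝ)| := by
        rw [← mul_sub, abs_mul, abs_of_nonneg hR0]
  have hkM : ∀ (p : V × V) (k : ℕ) (w : V), (Lf p.1 p.2)[k]? = some w → (k:ℝ) + 1 ≤ (M:ℝ) := by
    intro p k w h
    obtain ⟨hk, -⟩ := List.getElem?_eq_some_iff.mp h
    have h2 : k + 1 ≤ M := le_trans hk (hlenM p)
    exact_mod_cast h2
  have hstep : ∀ (s t : V), G.Adj s t → ∀ (k : ℕ) (w z : V),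
      (Lf s t)[k]? = some w → (Lf s t)[(k+1)]? = some z → G.Adj w z := by
    intro s t hst k w z hw hz
    obtain ⟨hk1, hw'⟩ := List.getElem?_eq_some_iff.mp hw
    obtain ⟨hk2, hz'⟩ := List.getElem?_eq_some_iff.mp hz
    have h3 : G.Adj (Lf s t)[k] (Lf s t)[k+1] :=
      (List.isChain_iff_getElem.mp (hLchain s t hst)) k (by omega)
    rwa [hw', hz'] at h3
  have hcand : ∀ (p : V × V), G.Adj p.1 p.2 → ∀ (k : ℕ) (u v : V), ¬ G.Adj u v →
      (Lf p.1 p.2)[k]? = some u → k + 1 < (Lf p.1 p.2).length →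
      ∃ z, (Lf p.1 p.2)[(k+1)]? = some z ∧ z ≠ u ∧ z ≠ v := by
    intro p hp k u v hnadj hk hlt
    refine ⟨(Lf p.1 p.2)[k+1], List.getElem?_eq_getElem hlt, ?_, ?_⟩
    · intro h
      have := hstep p.1 p.2 hp k u _ hk (List.getElem?_eq_getElem hlt)
      rw [h] at this
      exact G.irrefl this
    · intro h
      have := hstep p.1 p.2 hp k u _ hk (List.getElem?_eq_getElem hlt)
      rw [h] at this
      exact hnadj this
  have hXend : ∀ (p : V × V) (k : ℕ) (u : V),
      (Lf p.1 p.2)[k]? = some u → ¬ (k + 1 < (Lf p.1 p.2).length) → u = X := by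
    intro p k u hk hlt
    obtain ⟨hklt, -⟩ := List.getElem?_eq_some_iff.mp hk
    have hkk : k = (Lf p.1 p.2).length - 1 := by omega
    rw [hkk] at hk
    have h2 := hLlast p.1 p.2
    rw [hk] at h2
    exact Option.some_injective _ h2
  refine ⟨fun w => {x : ℝ × ℝ | ∃ p : V × V, G.Adj p.1 p.2 ∧ ∃ k : ℕ,
      (Lf p.1 p.2)[k]? = some w ∧ dist x (cx p, 0) = (k:ℝ) + 1}, ?_, ?_, ?_⟩
  · -- nonempty
    intro v
    obtain ⟨t, ht⟩ := hnb v
    refine ⟨(cx (v, t) + 1, 0), (v, t), ht, 0, hL0 v t, ?_⟩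
    rw [dist_mk_zero]
    norm_num
  · -- disjoint
    intro u v huv
    rw [Set.disjoint_left]
    rintro x ⟨p, hp, k, hk, hd⟩ ⟨q, hq, k', hk', hd'⟩
    by_cases hpq : p = q
    · subst hpq
      have h1 : (k:ℝ) + 1 = (k':ℝ) + 1 := hd.symm.trans hd'
      have h2 : k = k' := by exact_mod_cast (by linarith : (k:ℝ) = (k':ℝ))
      rw [h2] at hk
      exact huv (Option.some_injective _ (hk.symm.trans hk'))
    · have h1 := hsep p q hpq
      have h2 := dist_triangle_left ((cx p, (0:ℝ)) : ℝ × ℝ) ((cx q, 0) : ℝ × ℝ) x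
      have h3 := hkM p k u hk
      have h4 := hkM q k' v hk'
      rw [hd, hd'] at h2
      rw [hR] at h1
      linarith
  · -- adj_iff
    intro u v huv
    constructor
    · intro hadj
      refine ⟨(cx (u, v) + 1, 0), ⟨(u, v), hadj, 0, hL0 u v, by rw [dist_mk_zero]; norm_num⟩,
              (cx (u, v) + 2, 0), ⟨(u, v), hadj, 1, hL1 u v, by rw [dist_mk_zero]; norm_num⟩, ?_⟩
      intro w hwu hwv
      rw [Set.eq_empty_iff_forall_notMem]
      rintro x ⟨hxseg, q, hq, k, hk, hd⟩
      rw [segment_eq_image] at hxseg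
      obtain ⟨θ, hθ, hx⟩ := hxseg
      have hx2 : x = (cx (u, v) + 1 + θ, 0) := by
        rw [← hx]
        simp only [Prod.smul_mk, Prod.mk_add_mk, smul_eq_mul, smul_zero, add_zero,
          Prod.mk.injEq, mul_zero]
        constructor
        · ring
        · trivial
      have hdx : dist x ((cx (u, v), 0) : ℝ × ℝ) = 1 + θ := by
        rw [hx2, dist_mk_zero]
        have h5 : cx (u, v) + 1 + θ - cx (u, v) = 1 + θ := by ring
        rw [h5, abs_of_nonneg (by linarith [hθ.1])]
      by_cases hq2 : q = (u, v)
      · subst hq2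
        rw [hdx] at hd
        have hk1 : (k:ℝ) = θ := by linarith
        have hk2 : k ≤ 1 := by
          have : (k:ℝ) ≤ 1 := by rw [hk1]; exact hθ.2
          exact_mod_cast this
        interval_cases k
        · exact hwu (Option.some_injective _ (hk.symm.trans (hL0 u v)))
        · exact hwv (Option.some_injective _ (hk.symm.trans (hL1 u v)))
      · have h1 := hsep q (u, v) hq2
        have h2 := dist_triangle_left ((cx q, (0:ℝ)) : ℝ × ℝ) ((cx (u, v), 0) : ℝ × ℝ) x
        have h3 := hkM q k w hk
        rw [hd, hdx] at h2
        rw [hR] at h1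
        have hθ2 := hθ.2
        linarith
    · rintro ⟨a, ⟨p, hp, i, hLi, hdi⟩, b, ⟨q, hq, j, hLj, hdj⟩, hclear⟩
      by_contra hnadj
      have hblock : ∀ (pp : V × V) (k : ℕ) (z : V), G.Adj pp.1 pp.2 →
          (Lf pp.1 pp.2)[k]? = some z → z ≠ u → z ≠ v →
          ((dist a ((cx pp, 0) : ℝ × ℝ) ≤ (k:ℝ) + 1 ∧ (k:ℝ) + 1 ≤ dist b ((cx pp, 0) : ℝ × ℝ)) ∨
           (dist b ((cx pp, 0) : ℝ × ℝ) ≤ (k:ℝ) + 1 ∧ (k:ℝ) + 1 ≤ dist a ((cx pp, 0) : ℝ × ℝ))) →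
          False := by
        intro pp k z hpp hz hzu hzv hr
        obtain ⟨x, hxseg, hxd⟩ := exists_on_segment_dist (c := ((cx pp, 0) : ℝ × ℝ)) (r := (k:ℝ)+1) hr
        have hmem : x ∈ segment ℝ a b ∩ {x : ℝ × ℝ | ∃ p : V × V, G.Adj p.1 p.2 ∧ ∃ k : ℕ,
            (Lf p.1 p.2)[k]? = some z ∧ dist x (cx p, 0) = (k:ℝ) + 1} :=
          ⟨hxseg, pp, hpp, k, hz, hxd⟩
        rw [hclear z hzu hzv] at hmem
        exact hmem
      by_cases hpq : p = q
      · subst hpq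
        rcases lt_trichotomy i j with hij | hij | hij
        · have hlt : i + 1 < (Lf p.1 p.2).length := by
            obtain ⟨hj, -⟩ := List.getElem?_eq_some_iff.mp hLj
            omega
          obtain ⟨z, hz, hzu, hzv⟩ := hcand p hp i u v hnadj hLi hlt
          have hij' : (i:ℝ) + 1 ≤ (j:ℝ) := by exact_mod_cast hij
          refine hblock p (i+1) z hp hz hzu hzv (Or.inl ⟨?_, ?_⟩)
          · rw [hdi]; push_cast; linarith
          · rw [hdj]; push_cast; linarith
        · rw [hij] at hLi
          exact huv (Option.some_injective _ (hLi.symm.trans hLj))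
        · have hlt : j + 1 < (Lf p.1 p.2).length := by
            obtain ⟨hi, -⟩ := List.getElem?_eq_some_iff.mp hLi
            omega
          obtain ⟨z, hz, hzv, hzu⟩ := hcand p hp j v u (fun h => hnadj h.symm) hLj hlt
          have hij' : (j:ℝ) + 1 ≤ (i:ℝ) := by exact_mod_cast hij
          refine hblock p (j+1) z hp hz hzu hzv (Or.inr ⟨?_, ?_⟩)
          · rw [hdj]; push_cast; linarith
          · rw [hdi]; push_cast; linarith
      · by_cases hi1 : i + 1 < (Lf p.1 p.2).length
        · obtain ⟨z, hz, hzu, hzv⟩ := hcand p hp i u v hnadj hLi hi1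
          have hsep' := hsep p q hpq
          have htri := dist_triangle_left ((cx p, (0:ℝ)) : ℝ × ℝ) ((cx q, 0) : ℝ × ℝ) b
          have hjM := hkM q j v hLj
          have hzM := hkM p (i+1) z hz
          rw [hdj] at htri
          rw [hR] at hsep'
          push_cast at hzM
          refine hblock p (i+1) z hp hz hzu hzv (Or.inl ⟨?_, ?_⟩)
          · rw [hdi]; push_cast; linarith
          · push_cast; linarith
        · have hu : u = X := hXend p i u hLi hi1
          by_cases hj1 : j + 1 < (Lf q.1 q.2).length
          · obtain ⟨z, hz, hzv, hzu⟩ := hcand q hq j v u (fun h => hnadj h.symm) hLj hj1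
            have hsep' := hsep q p (Ne.symm hpq)
            have htri := dist_triangle_left ((cx q, (0:ℝ)) : ℝ × ℝ) ((cx p, 0) : ℝ × ℝ) a
            have hiM := hkM p i u hLi
            have hzM := hkM q (j+1) z hz
            rw [hdi] at htri
            rw [hR] at hsep'
            push_cast at hzM
            refine hblock q (j+1) z hq hz hzu hzv (Or.inr ⟨?_, ?_⟩)
            · rw [hdj]; push_cast; linarith
            · push_cast; linarith
          · exact huv (hu.trans (hXend q j v hLj hj1).symm)
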